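/- Let A be an admissible partition of C^s and Ω = {Y₀, …, Y_t} a finite set of admissible partitions with A ≤ Y_i for all i. Then the greatest lower bound glb_A(Ω) exists. -/

import Mathlib

namespace BrinThompson

/-- A finite binary word. -/
abbrev Word : Type := List Bool

/-- A box in `C^s`, recorded as the tuple of binary words whose cylinders form the product. -/
abbrev Box (s : ℕ) : Type := Fin s → Word

/-- The box obtained from `b` by replacing its `i`-th word `u` by `u ++ [bit]`. -/
def expandBox {s : ℕ} (i : Fin s) (bit : Bool) (b : Box s) : Box s :=
  Function.update b i (b i ++ [bit])

/-- `B` is obtained from `A` by a simple expansion of colour `i`: one box of `A` is replaced by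
its two halves in direction `i`. -/
def SimpleExpansionC {s : ℕ} (i : Fin s) (A B : Finset (Box s)) : Prop :=
  ∃ b ∈ A, B = insert (expandBox i false b) (insert (expandBox i true b) (A.erase b))

/-- `B` is obtained from `A` by a simple expansion of some colour. -/
def SimpleExpansion {s : ℕ} (A B : Finset (Box s)) : Prop :=
  ∃ i : Fin s, SimpleExpansionC i A B

/-- `Expands A B` (`A ≤ B`): `B` is a descendant of `A`, i.e. `B` is obtained from `A` by
finitely many simple expansions. -/
def Expands {s : ℕ} (A B : Finset (Box s)) : Prop :=
  Relation.ReflTransGen SimpleExpansion A B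

/-- The one-element partition `{C^s}`. -/
def trivialPartition (s : ℕ) : Finset (Box s) := {fun _ => []}

/-- An admissible partition of `C^s`. -/
def Admissible {s : ℕ} (A : Finset (Box s)) : Prop :=
  Expands (trivialPartition s) A

/-- `M = glb_A(Ω)`: the greatest lower bound of `Ω` above `A`. -/
def IsGlbAbove {s : ℕ} (A : Finset (Box s)) (Ω : Set (Finset (Box s)))
    (M : Finset (Box s)) : Prop :=
  Admissible M ∧ Expands A M ∧ (∀ B ∈ Ω, Expands M B) ∧
    ∀ N : Finset (Box s), Admissible N → Expands A N → (∀ B ∈ Ω, Expands N B) → Expands N M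

/-- The depth of a box: the total length of its defining words. -/
def depth {s : ℕ} (b : Box s) : ℕ := ∑ i, (b i).length

/-- `BoxLE m b`: the box `m` contains the box `b`, i.e. each word of `m` is a prefix of the
corresponding word of `b`. -/
def BoxLE {s : ℕ} (m b : Box s) : Prop := ∀ i, m i <+: b i

/-- A box `y ∈ Y` is locally maximal with respect to `A`: for the box `m` of `A` containing `y`,
every box `j ∈ Y` contained in `m` satisfies `l(A,j) ≤ l(A,y)`, i.e. `depth j ≤ depth y`. -/
def LocallyMaximal {s : ℕ} (A Y : Finset (Box s)) (y : Box s) : Prop :=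
  ∀ m ∈ A, BoxLE m y → ∀ j ∈ Y, BoxLE m j → depth j ≤ depth y

/-- There is an edge of colour `i` between `y, y' ∈ Y` in the graph `Γ_A`: some simple
contraction `Z` of `Y` of colour `i` with `A ≤ Z` merges exactly `y` and `y'`. -/
def GammaAdjC {s : ℕ} (A Y : Finset (Box s)) (i : Fin s) (y y' : Box s) : Prop :=
  y ≠ y' ∧ y ∈ Y ∧ y' ∈ Y ∧
    ∃ Z : Finset (Box s), Admissible Z ∧ SimpleExpansionC i Z Y ∧ Expands A Z ∧
      Y \ Z = {y, y'}

/-- The graph `Γ_A` (with its colours forgotten). -/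
def Gamma {s : ℕ} (A Y : Finset (Box s)) : SimpleGraph (Box s) where
  Adj y y' := ∃ i : Fin s, GammaAdjC A Y i y y'
  symm := by
    constructor
    rintro y y' ⟨i, hne, hy, hy', Z, h1, h2, h3, h4⟩
    exact ⟨i, hne.symm, hy', hy, Z, h1, h2, h3, by rwa [Finset.pair_comm]⟩
  loopless := by constructor; rintro y ⟨i, hne, _⟩; exact hne rfl

/-- The geometric realization of the order complex (nerve) of the relation `le` on `P`:
finitely supported probability densities on `P` whose support is a chain, topologised as a
subspace of `P → ℝ`. -/
abbrev OrderComplex (P : Type*) (le : P → P → Prop) : Type _ :=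
  {f : P → ℝ // (Function.support f).Finite ∧ (∀ x, 0 ≤ f x) ∧
    IsChain le (Function.support f) ∧ ∑ᶠ x, f x = 1}

/-- A space is `t`-connected if it is nonempty, path-connected and its homotopy groups
`π_k` vanish for `1 ≤ k ≤ t`. -/
def TConnected (t : ℕ) (X : Type*) [TopologicalSpace X] : Prop :=
  Nonempty X ∧ PathConnectedSpace X ∧
    ∀ k : ℕ, 1 ≤ k → k ≤ t → ∀ x : X, Subsingleton (HomotopyGroup (Fin k) X x)

/-! ### auxiliary -/

lemma word_step {u v : Word} (h : u <+: v) (hl : u.length < v.length) :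
    ∃ c, u ++ [c] <+: v := by
  refine ⟨v.get ⟨u.length, hl⟩, ?_⟩
  have hh := List.prefix_iff_eq_take.mp h
  have h2 : v.take (u.length + 1) = u ++ [v.get ⟨u.length, hl⟩] := by
    rw [List.take_succ, ← hh]
    simp [List.getElem?_eq_getElem hl]
  rw [← h2]; exact List.take_prefix _ _

def Compat {s : ℕ} (b c : Box s) : Prop := ∀ i, b i <+: c i ∨ c i <+: b i

lemma Compat.symm {s : ℕ} {b c : Box s} (h : Compat b c) : Compat c b :=
  fun i => (h i).symm

def PDisj {s : ℕ} (N : Finset (Box s)) : Prop :=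
  ∀ b ∈ N, ∀ c ∈ N, Compat b c → b = c

def meet {s : ℕ} (b c : Box s) : Box s :=
  fun j => if (b j).length ≤ (c j).length then c j else b j

lemma meet_eval_right {s : ℕ} {b c : Box s} {j : Fin s} (h : b j <+: c j) :
    meet b c j = c j := by
  unfold meet; rw [if_pos h.length_le]

lemma meet_eval_left {s : ℕ} {b c : Box s} {j : Fin s} (h : c j <+: b j) :
    meet b c j = b j := by
  unfold meet; split
  · exact (h.eq_of_length (le_antisymm h.length_le (by assumption)))
  · rfl

lemma prefix_meet_left {s : ℕ} {b c : Box s} (h : Compat b c) (j : Fin s) :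
    b j <+: meet b c j := by
  rcases h j with h' | h'
  · rw [meet_eval_right h']; exact h'
  · rw [meet_eval_left h']

lemma prefix_meet_right {s : ℕ} {b c : Box s} (h : Compat b c) (j : Fin s) :
    c j <+: meet b c j := by
  rcases h j with h' | h'
  · rw [meet_eval_right h']
  · rw [meet_eval_left h']; exact h'

lemma meet_comm {s : ℕ} {b c : Box s} (h : Compat b c) : meet b c = meet c b := by
  funext j
  rcases h j with h' | h'
  · rw [meet_eval_right h', meet_eval_left (b := c) h']
  · rw [meet_eval_left h', meet_eval_right (b := c) h']

lemma meet_eq_left {s : ℕ} {b c : Box s} (h : BoxLE c b) : meet b c = b := by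
  funext j; exact meet_eval_left (h j)

lemma compat_of_boxLE {s : ℕ} {b m : Box s} (h : BoxLE m b) : Compat b m :=
  fun i => Or.inr (h i)

lemma compat_of_prefixes {s : ℕ} {b c x y : Box s} (hbx : ∀ j, b j <+: x j)
    (hcy : ∀ j, c j <+: y j) (hxy : Compat x y) : Compat b c := by
  intro j
  rcases hxy j with h | h
  · exact List.prefix_or_prefix_of_prefix ((hbx j).trans h) (hcy j)
  · exact List.prefix_or_prefix_of_prefix (hbx j) ((hcy j).trans h)

lemma expandBox_same {s : ℕ} (i : Fin s) (c : Bool) (b : Box s) :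
    expandBox i c b i = b i ++ [c] := Function.update_self i _ b

lemma expandBox_noteq {s : ℕ} {i j : Fin s} (h : j ≠ i) (c : Bool) (b : Box s) :
    expandBox i c b j = b j := Function.update_of_ne h _ b

lemma boxLE_expand {s : ℕ} (i : Fin s) (c : Bool) (b : Box s) :
    BoxLE b (expandBox i c b) := by
  intro j
  by_cases h : j = i
  · subst h; rw [expandBox_same]; exact List.prefix_append _ _
  · rw [expandBox_noteq h]

lemma boxLE_refl {s : ℕ} (b : Box s) : BoxLE b b := fun _ => List.prefix_refl _
lemma boxLE_trans {s : ℕ} {a b c : Box s} (h1 : BoxLE a b) (h2 : BoxLE b c) :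
    BoxLE a c := fun i => (h1 i).trans (h2 i)

lemma expand_ne {s : ℕ} (i : Fin s) (c : Bool) (b : Box s) : expandBox i c b ≠ b := by
  intro h
  have := congrFun h i
  rw [expandBox_same] at this
  simpa using congrArg List.length this

lemma expand_false_ne_true {s : ℕ} (i : Fin s) (b : Box s) :
    expandBox i false b ≠ expandBox i true b := by
  intro h
  have := congrFun h i
  rw [expandBox_same, expandBox_same] at this
  simp at this

lemma compat_expand {s : ℕ} (i : Fin s) (c : Bool) (b : Box s) :
    Compat (expandBox i c b) b := compat_of_boxLE (boxLE_expand i c b)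

lemma compat_of_boxLE_compat {s : ℕ} {b u v : Box s} (h : BoxLE b u) (h2 : Compat u v) :
    Compat b v := by
  intro j
  rcases h2 j with h' | h'
  · exact Or.inl ((h j).trans h')
  · exact List.prefix_or_prefix_of_prefix (h j) h'

lemma pdisj_trivial (s : ℕ) : PDisj (trivialPartition s) := by
  intro b hb c hc _
  simp only [trivialPartition, Finset.mem_singleton] at hb hc
  rw [hb, hc]

lemma pdisj_expansion {s : ℕ} {A B : Finset (Box s)} (h : SimpleExpansion A B)
    (hA : PDisj A) : PDisj B := by
  obtain ⟨i, b, hb, rfl⟩ := h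
  have key : ∀ c : Bool, ∀ v ∈ A.erase b, ¬ Compat (expandBox i c b) v := by
    intro c v hv hcv
    have hvA := Finset.mem_of_mem_erase hv
    have : b = v := hA b hb v hvA (compat_of_boxLE_compat (boxLE_expand i c b) hcv)
    exact (Finset.ne_of_mem_erase hv) this.symm
  have keyct : ¬ Compat (expandBox i false b) (expandBox i true b) := by
    intro h
    rcases h i with h' | h' <;>
    · rw [expandBox_same, expandBox_same] at h'
      have := h'.eq_of_length (by simp)
      simp at this
  intro u hu v hv huv
  simp only [Finset.mem_insert] at hu hv
  rcases hu with rfl | rfl | hu <;> rcases hv with rfl | rfl | hv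
  · rfl
  · exact absurd huv keyct
  · exact absurd huv (key _ _ hv)
  · exact absurd huv.symm keyct
  · rfl
  · exact absurd huv (key _ _ hv)
  · exact absurd huv.symm (key _ _ hu)
  · exact absurd huv.symm (key _ _ hu)
  · exact hA u (Finset.mem_of_mem_erase hu) v (Finset.mem_of_mem_erase hv) huv

lemma pdisj_expands {s : ℕ} {A B : Finset (Box s)} (h : Expands A B) (hA : PDisj A) :
    PDisj B := by
  induction h with
  | refl => exact hA
  | tail _ hstep ih => exact pdisj_expansion hstep ih

lemma pdisj_admissible {s : ℕ} {A : Finset (Box s)} (h : Admissible A) : PDisj A :=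
  pdisj_expands h (pdisj_trivial s)

lemma card_expansion {s : ℕ} {A B : Finset (Box s)} (h : SimpleExpansion A B)
    (hA : PDisj A) : B.card = A.card + 1 := by
  obtain ⟨i, b, hb, rfl⟩ := h
  have hnotmem : ∀ c : Bool, expandBox i c b ∉ A := by
    intro c hc
    have : expandBox i c b = b := hA _ hc b hb (compat_expand i c b)
    exact expand_ne i c b this
  have h1 : expandBox i true b ∉ A.erase b := fun h => hnotmem true (Finset.mem_of_mem_erase h)
  have h0 : expandBox i false b ∉ insert (expandBox i true b) (A.erase b) := by
    simp only [Finset.mem_insert]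
    rintro (h | h)
    · exact expand_false_ne_true i b h
    · exact hnotmem false (Finset.mem_of_mem_erase h)
  rw [Finset.card_insert_of_notMem h0, Finset.card_insert_of_notMem h1,
    Finset.card_erase_of_mem hb]
  have : 1 ≤ A.card := Finset.card_pos.mpr ⟨b, hb⟩
  omega

lemma card_expands {s : ℕ} {A B : Finset (Box s)} (h : Expands A B) (hA : PDisj A) :
    A = B ∨ A.card < B.card := by
  induction h with
  | refl => exact Or.inl rfl
  | tail hab hstep ih =>
    right
    have hpd := pdisj_expands hab hA
    have hc := card_expansion hstep hpd
    rcases ih with rfl | hlt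
    · omega
    · omega

lemma expands_exists_descendant {s : ℕ} {A B : Finset (Box s)} (h : Expands A B) :
    ∀ a ∈ A, ∃ b ∈ B, BoxLE a b := by
  induction h with
  | refl => exact fun a ha => ⟨a, ha, boxLE_refl a⟩
  | tail hab hstep ih =>
    intro a ha
    obtain ⟨b0, hb0, hle⟩ := ih a ha
    obtain ⟨i, t, ht, rfl⟩ := hstep
    by_cases hbt : b0 = t
    · subst hbt
      exact ⟨expandBox i false b0, by simp, boxLE_trans hle (boxLE_expand i false b0)⟩
    · exact ⟨b0, by simp [Finset.mem_erase, hbt, hb0], hle⟩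

lemma expands_refines {s : ℕ} {M B : Finset (Box s)} (h : Expands M B) :
    ∀ b ∈ B, ∃ m ∈ M, BoxLE m b := by
  induction h with
  | refl => exact fun b hb => ⟨b, hb, boxLE_refl b⟩
  | tail hab hstep ih =>
    obtain ⟨i, t, ht, rfl⟩ := hstep
    intro b hb
    simp only [Finset.mem_insert] at hb
    rcases hb with rfl | rfl | hb
    · obtain ⟨m, hm, hle⟩ := ih t ht
      exact ⟨m, hm, boxLE_trans hle (boxLE_expand i false t)⟩
    · obtain ⟨m, hm, hle⟩ := ih t ht
      exact ⟨m, hm, boxLE_trans hle (boxLE_expand i true t)⟩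
    · exact ih b (Finset.mem_of_mem_erase hb)

instance {s : ℕ} (b c : Box s) : Decidable (Compat b c) := by
  unfold Compat; infer_instance

/-- Common refinement. -/
def CR {s : ℕ} (N M : Finset (Box s)) : Finset (Box s) :=
  ((N ×ˢ M).filter fun p => Compat p.1 p.2).image fun p => meet p.1 p.2

lemma mem_CR {s : ℕ} {N M : Finset (Box s)} {x : Box s} :
    x ∈ CR N M ↔ ∃ n ∈ N, ∃ m ∈ M, Compat n m ∧ meet n m = x := by
  unfold CR
  constructor
  · intro hx
    obtain ⟨p, hp, rfl⟩ := Finset.mem_image.mp hx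
    obtain ⟨hmem, hc⟩ := Finset.mem_filter.mp hp
    obtain ⟨h1, h2⟩ := Finset.mem_product.mp hmem
    exact ⟨p.1, h1, p.2, h2, hc, rfl⟩
  · rintro ⟨n, hn, m, hm, hc, rfl⟩
    exact Finset.mem_image.mpr
      ⟨(n, m), Finset.mem_filter.mpr ⟨Finset.mem_product.mpr ⟨hn, hm⟩, hc⟩, rfl⟩

lemma CR_comm {s : ℕ} (N M : Finset (Box s)) : CR N M = CR M N := by
  ext x
  simp only [mem_CR]
  constructor
  · rintro ⟨n, hn, m, hm, hc, rfl⟩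
    exact ⟨m, hm, n, hn, hc.symm, (meet_comm hc).symm⟩
  · rintro ⟨m, hm, n, hn, hc, rfl⟩
    exact ⟨n, hn, m, hm, hc.symm, (meet_comm hc).symm⟩

lemma pdisj_CR {s : ℕ} {N M : Finset (Box s)} (hN : PDisj N) (hM : PDisj M) :
    PDisj (CR N M) := by
  intro x hx y hy hxy
  rw [mem_CR] at hx hy
  obtain ⟨n, hn, m, hm, hc, rfl⟩ := hx
  obtain ⟨n', hn', m', hm', hc', rfl⟩ := hy
  have hnn : n = n' :=
    hN n hn n' hn' (compat_of_prefixes (prefix_meet_left hc) (prefix_meet_left hc') hxy)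
  have hmm : m = m' :=
    hM m hm m' hm' (compat_of_prefixes (prefix_meet_right hc) (prefix_meet_right hc') hxy)
  rw [hnn, hmm]

lemma CR_trivial {s : ℕ} (N : Finset (Box s)) : CR N (trivialPartition s) = N := by
  ext x
  rw [mem_CR]
  constructor
  · rintro ⟨n, hn, m, hm, hc, rfl⟩
    simp only [trivialPartition, Finset.mem_singleton] at hm
    subst hm
    have : meet n (fun _ => ([] : Word)) = n := meet_eq_left (fun j => List.nil_prefix)
    rw [this]; exact hn
  · intro hx
    refine ⟨x, hx, (fun _ => []), by simp [trivialPartition], fun j => Or.inr List.nil_prefix, ?_⟩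
    exact meet_eq_left (fun j => List.nil_prefix)

def splitSet {s : ℕ} (i : Fin s) (T P : Finset (Box s)) : Finset (Box s) :=
  (P \ T) ∪ T.biUnion (fun b => {expandBox i false b, expandBox i true b})

lemma expands_splitSet {s : ℕ} (i : Fin s) (T : Finset (Box s)) :
    ∀ P : Finset (Box s), PDisj P → T ⊆ P → Expands P (splitSet i T P) := by
  classical
  induction T using Finset.induction_on with
  | empty => intro P _ _; simp [splitSet]; exact Relation.ReflTransGen.refl
  | @insert t T ht ih =>
    intro P hP hTP
    have htP : t ∈ P := hTP (Finset.mem_insert_self t T)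
    set P₁ : Finset (Box s) :=
      insert (expandBox i false t) (insert (expandBox i true t) (P.erase t)) with hP₁
    have hstep : SimpleExpansion P P₁ := ⟨i, t, htP, rfl⟩
    have hP₁pd : PDisj P₁ := pdisj_expansion hstep hP
    have hTP₁ : T ⊆ P₁ := by
      intro u hu
      have huP : u ∈ P := hTP (Finset.mem_insert_of_mem hu)
      have hut : u ≠ t := fun h => ht (h ▸ hu)
      simp [hP₁, Finset.mem_insert, Finset.mem_erase, hut, huP]
    have hrec := ih P₁ hP₁pd hTP₁
    have hexp : ∀ c : Bool, expandBox i c t ∉ P := by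
      intro c hc
      exact expand_ne i c t (hP _ hc t htP (compat_expand i c t))
    have hfT : ∀ c : Bool, expandBox i c t ∉ T := fun c h =>
      hexp c (hTP (Finset.mem_insert_of_mem h))
    have hkey : splitSet i T P₁ = splitSet i (insert t T) P := by
      ext x
      simp only [splitSet, Finset.mem_union, Finset.mem_sdiff, Finset.mem_biUnion,
        Finset.mem_insert, Finset.mem_singleton, Finset.mem_erase, hP₁]
      constructor
      · rintro (⟨(rfl | rfl | ⟨hxt, hxP⟩), hxT⟩ | ⟨b, hbT, hxb⟩)
        · exact Or.inr ⟨t, Or.inl rfl, Or.inl rfl⟩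
        · exact Or.inr ⟨t, Or.inl rfl, Or.inr rfl⟩
        · refine Or.inl ⟨hxP, ?_⟩
          rintro (rfl | h)
          · exact hxt rfl
          · exact hxT h
        · exact Or.inr ⟨b, Or.inr hbT, hxb⟩
      · rintro (⟨hxP, hxnot⟩ | ⟨b, (rfl | hbT), hxb⟩)
        · refine Or.inl ⟨Or.inr (Or.inr ⟨fun h => hxnot (Or.inl h), hxP⟩),
            fun h => hxnot (Or.inr h)⟩
        · rcases hxb with rfl | rfl
          · exact Or.inl ⟨Or.inl rfl, hfT false⟩
          · exact Or.inl ⟨Or.inr (Or.inl rfl), hfT true⟩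
        · exact Or.inr ⟨b, hbT, hxb⟩
    rw [← hkey]
    exact Relation.ReflTransGen.head hstep hrec

lemma compat_refl {s : ℕ} (b : Box s) : Compat b b := fun _ => Or.inl (List.prefix_refl _)

lemma expands_CR_step {s : ℕ} {N M₀ M : Finset (Box s)} {i : Fin s}
    (hN : PDisj N) (hM : PDisj M₀) (h : SimpleExpansionC i M₀ M) :
    Expands (CR N M₀) (CR N M) := by
  classical
  obtain ⟨m, hm, rfl⟩ := h
  set T : Finset (Box s) :=
    (N.filter fun n => Compat n m ∧ (n i).length ≤ (m i).length).image
      (fun n => meet n m) with hT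
  have memT : ∀ x : Box s, x ∈ T ↔
      ∃ n ∈ N, (Compat n m ∧ (n i).length ≤ (m i).length) ∧ meet n m = x := by
    intro x
    simp only [hT, Finset.mem_image, Finset.mem_filter]
    tauto
  have factC : ∀ (n : Box s) (c : Bool), Compat n (expandBox i c m) →
      (n i).length ≤ (m i).length → Compat n m := by
    intro n c hc hlen j
    by_cases hj : j = i
    · subst hj
      left
      have h1 : n j <+: expandBox j c m j := by
        rcases hc j with h' | h'
        · exact h'
        · exfalso
          have := h'.length_le
          rw [expandBox_same] at this
          simp at this
          omega
      rw [expandBox_same] at h1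
      exact List.prefix_of_prefix_length_le h1 (List.prefix_append _ _) hlen
    · have := hc j
      rwa [expandBox_noteq hj] at this
  have factA : ∀ (n : Box s), Compat n m → (n i).length ≤ (m i).length → ∀ c : Bool,
      Compat n (expandBox i c m) ∧
        meet n (expandBox i c m) = expandBox i c (meet n m) := by
    intro n hc hlen c
    have hpre : n i <+: m i := by
      rcases hc i with h' | h'
      · exact h'
      · have heq : m i = n i := h'.eq_of_length (le_antisymm h'.length_le hlen)
        rw [← heq]
    constructor
    · intro j
      by_cases hj : j = i
      · subst hj
        left
        rw [expandBox_same]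
        exact hpre.trans (List.prefix_append _ _)
      · rw [expandBox_noteq hj]
        exact hc j
    · funext j
      by_cases hj : j = i
      · subst hj
        have h1 : n j <+: expandBox j c m j := by
          rw [expandBox_same]; exact hpre.trans (List.prefix_append _ _)
        rw [meet_eval_right h1, expandBox_same, expandBox_same, meet_eval_right hpre]
      · rw [expandBox_noteq hj]
        unfold meet
        rw [expandBox_noteq hj]
  have factB : ∀ (n : Box s) (c : Bool), Compat n (expandBox i c m) →
      (m i).length < (n i).length →
      Compat n m ∧ meet n (expandBox i c m) = meet n m := by
    intro n c hc hlen
    have hpre : expandBox i c m i <+: n i := by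
      rcases hc i with h' | h'
      · have hle : (expandBox i c m i).length ≤ (n i).length := by
          rw [expandBox_same]; simp; omega
        have heq : n i = expandBox i c m i := h'.eq_of_length (le_antisymm h'.length_le hle)
        rw [heq]
      · exact h'
    have hprem : m i <+: n i := by
      have h2 : m i <+: expandBox i c m i := by
        rw [expandBox_same]; exact List.prefix_append _ _
      exact h2.trans hpre
    have hcm : Compat n m := by
      intro j
      by_cases hj : j = i
      · subst hj; exact Or.inr hprem
      · have := hc j
        rwa [expandBox_noteq hj] at this
    refine ⟨hcm, ?_⟩
    funext j
    by_cases hj : j = i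
    · subst hj
      rw [meet_eval_left hpre, meet_eval_left hprem]
    · unfold meet
      rw [expandBox_noteq hj]
  have factB' : ∀ n : Box s, Compat n m → (m i).length < (n i).length →
      ∃ c, Compat n (expandBox i c m) := by
    intro n hc hlen
    have hpre : m i <+: n i := by
      rcases hc i with h' | h'
      · exact absurd h'.length_le (by omega)
      · exact h'
    obtain ⟨c, hc'⟩ := word_step hpre hlen
    refine ⟨c, fun j => ?_⟩
    by_cases hj : j = i
    · subst hj; rw [expandBox_same]; exact Or.inr hc'
    · rw [expandBox_noteq hj]; exact hc j
  have hTsub : T ⊆ CR N M₀ := by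
    intro x hx
    obtain ⟨n, hn, ⟨hcm, _⟩, rfl⟩ := (memT x).mp hx
    exact mem_CR.mpr ⟨n, hn, m, hm, hcm, rfl⟩
  have hPD : PDisj (CR N M₀) := pdisj_CR hN hM
  suffices hkey : CR N (insert (expandBox i false m) (insert (expandBox i true m)
      (M₀.erase m))) = splitSet i T (CR N M₀) by
    rw [hkey]
    exact expands_splitSet i T _ hPD hTsub
  ext x
  constructor
  · intro hx
    obtain ⟨n, hn, m', hm', hc, rfl⟩ := mem_CR.mp hx
    simp only [Finset.mem_insert] at hm'
    have hcase : (∃ c : Bool, m' = expandBox i c m) ∨ (m' ≠ m ∧ m' ∈ M₀) := by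
      rcases hm' with rfl | rfl | hm'
      · exact Or.inl ⟨false, rfl⟩
      · exact Or.inl ⟨true, rfl⟩
      · exact Or.inr ⟨(Finset.mem_erase.mp hm').1, (Finset.mem_erase.mp hm').2⟩
    rcases hcase with ⟨c, rfl⟩ | ⟨hne, hm'M₀⟩
    · by_cases hlen : (n i).length ≤ (m i).length
      · have hcm := factC n c hc hlen
        obtain ⟨_, hmeq⟩ := factA n hcm hlen c
        rw [hmeq]
        refine Finset.mem_union_right _ (Finset.mem_biUnion.mpr
          ⟨meet n m, (memT _).mpr ⟨n, hn, ⟨hcm, hlen⟩, rfl⟩, ?_⟩)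
        cases c <;> simp
      · push_neg at hlen
        obtain ⟨hcm, hmeq⟩ := factB n c hc hlen
        rw [hmeq]
        refine Finset.mem_union_left _ (Finset.mem_sdiff.mpr
          ⟨mem_CR.mpr ⟨n, hn, m, hm, hcm, rfl⟩, ?_⟩)
        intro hmemT
        obtain ⟨n₁, hn₁, ⟨hcm₁, hlen₁⟩, heq₁⟩ := (memT _).mp hmemT
        have hnn : n₁ = n := by
          refine hN n₁ hn₁ n hn (compat_of_prefixes ?_ (prefix_meet_left hcm)
            (compat_refl (meet n m)))
          intro j
          rw [← heq₁]
          exact prefix_meet_left hcm₁ j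
        subst hnn
        omega
    · refine Finset.mem_union_left _ (Finset.mem_sdiff.mpr
        ⟨mem_CR.mpr ⟨n, hn, m', hm'M₀, hc, rfl⟩, ?_⟩)
      intro hmemT
      obtain ⟨n₁, hn₁, ⟨hcm₁, hlen₁⟩, heq₁⟩ := (memT _).mp hmemT
      refine hne (hM m' hm'M₀ m hm (compat_of_prefixes (prefix_meet_right hc) ?_
        (compat_refl (meet n m'))))
      intro j
      rw [← heq₁]
      exact prefix_meet_right hcm₁ j
  · intro hx
    rcases Finset.mem_union.mp hx with hx | hx
    · obtain ⟨hxCR, hxT⟩ := Finset.mem_sdiff.mp hx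
      obtain ⟨n, hn, m'', hm'', hc, rfl⟩ := mem_CR.mp hxCR
      by_cases hmm : m'' = m
      · subst hmm
        by_cases hlen : (n i).length ≤ (m'' i).length
        · exact absurd ((memT _).mpr ⟨n, hn, ⟨hc, hlen⟩, rfl⟩) hxT
        · push_neg at hlen
          obtain ⟨c, hcc⟩ := factB' n hc hlen
          obtain ⟨_, hmeq⟩ := factB n c hcc hlen
          refine mem_CR.mpr ⟨n, hn, expandBox i c m'', ?_, hcc, hmeq⟩
          cases c <;> simp
      · refine mem_CR.mpr ⟨n, hn, m'', ?_, hc, rfl⟩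
        simp only [Finset.mem_insert, Finset.mem_erase]
        exact Or.inr (Or.inr ⟨hmm, hm''⟩)
    · obtain ⟨w, hwT, hxw⟩ := Finset.mem_biUnion.mp hx
      obtain ⟨n, hn, ⟨hcm, hlen⟩, rfl⟩ := (memT w).mp hwT
      simp only [Finset.mem_insert, Finset.mem_singleton] at hxw
      rcases hxw with rfl | rfl
      · obtain ⟨hcc, hmeq⟩ := factA n hcm hlen false
        exact mem_CR.mpr ⟨n, hn, expandBox i false m, by simp, hcc, hmeq⟩
      · obtain ⟨hcc, hmeq⟩ := factA n hcm hlen true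
        exact mem_CR.mpr ⟨n, hn, expandBox i true m, by simp, hcc, hmeq⟩

lemma expands_CR_right {s : ℕ} {N M : Finset (Box s)} (hN : PDisj N) (hM : Admissible M) :
    Expands N (CR N M) := by
  induction hM with
  | refl => rw [CR_trivial]; exact Relation.ReflTransGen.refl
  | tail hb hstep ih =>
    obtain ⟨i, hi⟩ := hstep
    exact ih.trans (expands_CR_step hN (pdisj_expands hb (pdisj_trivial s)) hi)

lemma CR_eq_of_refines {s : ℕ} {B M : Finset (Box s)} (hM : PDisj M)
    (h : ∀ b ∈ B, ∃ m ∈ M, BoxLE m b) : CR B M = B := by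
  ext x
  rw [mem_CR]
  constructor
  · rintro ⟨b, hb, m', hm', hc, rfl⟩
    obtain ⟨mb, hmb, hle⟩ := h b hb
    have hmm : m' = mb := by
      refine hM m' hm' mb hmb (compat_of_prefixes (prefix_meet_right hc) ?_ (compat_refl _))
      intro j
      exact (hle j).trans (prefix_meet_left hc j)
    subst hmm
    rw [meet_eq_left hle]
    exact hb
  · intro hx
    obtain ⟨mb, hmb, hle⟩ := h x hx
    exact ⟨x, hx, mb, hmb, compat_of_boxLE hle, meet_eq_left hle⟩

lemma expands_CR_to {s : ℕ} {N M B : Finset (Box s)} (hM : PDisj M)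
    (hNB : Expands N B) (hMB : Expands M B) : PDisj N → Expands (CR N M) B := by
  induction hNB using Relation.ReflTransGen.head_induction_on with
  | refl =>
    intro _
    rw [CR_eq_of_refines hM (expands_refines hMB)]
    exact Relation.ReflTransGen.refl
  | head hstep hrest ih =>
    rename_i N₀ N₁
    intro hN
    have hN₁ : PDisj N₁ := pdisj_expansion hstep hN
    obtain ⟨i, hi⟩ := hstep
    have h1 : Expands (CR M N₀) (CR M N₁) := expands_CR_step hM hN hi
    rw [CR_comm]
    exact h1.trans (by rw [CR_comm]; exact ih hN₁)


theorem exists_isGlbAbove' (s : ℕ)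
    (A : Finset (Box s)) (hA : Admissible A)
    (Ω : Set (Finset (Box s))) (hne : Ω.Nonempty)
    (hAΩ : ∀ B ∈ Ω, Expands A B) :
    ∃ M : Finset (Box s), IsGlbAbove A Ω M := by
  classical
  obtain ⟨B₀, hB₀⟩ := hne
  set S : Set (Finset (Box s)) :=
    {N | Admissible N ∧ Expands A N ∧ ∀ B ∈ Ω, Expands N B} with hS
  have hSfin : S.Finite := by
    set W : Finset Word := B₀.biUnion (fun b => Finset.univ.biUnion
      (fun i : Fin s => (Finset.range ((b i).length + 1)).image (fun k => (b i).take k)))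
      with hW
    refine Set.Finite.subset
      (Finset.finite_toSet ((Fintype.piFinset (fun _ : Fin s => W)).powerset)) ?_
    intro N hN
    rw [Finset.mem_coe, Finset.mem_powerset]
    intro n hn
    obtain ⟨b, hb, hle⟩ := expands_exists_descendant (hN.2.2 B₀ hB₀) n hn
    rw [Fintype.mem_piFinset]
    intro i
    refine Finset.mem_biUnion.mpr ⟨b, hb, Finset.mem_biUnion.mpr
      ⟨i, Finset.mem_univ i, Finset.mem_image.mpr ⟨(n i).length, ?_, ?_⟩⟩⟩
    · exact Finset.mem_range.mpr (by have := (hle i).length_le; omega)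
    · exact (List.prefix_iff_eq_take.mp (hle i)).symm
  have hAS : A ∈ S := ⟨hA, Relation.ReflTransGen.refl, hAΩ⟩
  obtain ⟨M, hMS, hmax⟩ :=
    Set.Finite.exists_maximalFor (fun N : Finset (Box s) => N.card) S hSfin ⟨A, hAS⟩
  obtain ⟨hMadm, hAM, hMΩ⟩ := hMS
  refine ⟨M, hMadm, hAM, hMΩ, ?_⟩
  intro N hNadm hAN hNΩ
  have hNpd := pdisj_admissible hNadm
  have hMpd := pdisj_admissible hMadm
  have hNZ : Expands N (CR N M) := expands_CR_right hNpd hMadm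
  have hMZ : Expands M (CR N M) := by
    rw [CR_comm]; exact expands_CR_right hMpd hNadm
  have hZS : CR N M ∈ S := by
    refine ⟨hMadm.trans hMZ, hAN.trans hNZ, ?_⟩
    intro B hB
    exact expands_CR_to hMpd (hNΩ B hB) (hMΩ B hB) hNpd
  have hle : M.card ≤ (CR N M).card := by
    rcases card_expands hMZ hMpd with h | h
    · exact le_of_eq (congrArg Finset.card h)
    · omega
  have hcard : (CR N M).card ≤ M.card := hmax (j := CR N M) hZS hle
  have hMeq : M = CR N M := by
    rcases card_expands hMZ hMpd with h | h
    · exact h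
    · omega
  rw [hMeq]
  exact hNZ


/-- the greatest lower bound `glb_A(Ω)` exists. -/
theorem exists_isGlbAbove (s : ℕ) (hs : 1 ≤ s)
    (A : Finset (Box s)) (hA : Admissible A)
    (Ω : Set (Finset (Box s))) (hfin : Ω.Finite) (hne : Ω.Nonempty)
    (hadm : ∀ B ∈ Ω, Admissible B) (hAΩ : ∀ B ∈ Ω, Expands A B) :
    ∃ M : Finset (Box s), IsGlbAbove A Ω M :=
  exists_isGlbAbove' s A hA Ω hne hAΩ

end BrinThompson
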